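/- Let A, B be 2×2 complex matrices with |det A| = |det B| = 1, and let w₁, w₂, w₃ be unit vectors in ℂ². Then |w₁ ∧ A w₂| ≤ |w₃ ∧ A w₂| + √2 · ‖A‖ · |w₁ ∧ w₃|, where u ∧ v denotes the determinant of the 2×2 matrix with columns u and v. -/

import Mathlib

open scoped ComplexInnerProductSpace


/-- The wedge (2×2 determinant) of two vectors in ℂ². -/
noncomputable def wedge (u v : Fin 2 → ℂ) : ℂ := u 0 * v 1 - u 1 * v 0

/-- Operator norm of a 2×2 complex matrix w.r.t. the Euclidean norm on ℂ². -/
noncomputable def opNorm (A : Matrix (Fin 2) (Fin 2) ℂ) : ℝ :=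
  ‖Matrix.toEuclideanCLM (𝕜 := ℂ) A‖

lemma wedge_abs_le (u v : EuclideanSpace ℂ (Fin 2)) :
    ‖wedge u v‖ ≤ ‖u‖ * ‖v‖ := by
  set m : EuclideanSpace ℂ (Fin 2) :=
    (WithLp.equiv 2 (Fin 2 → ℂ)).symm ![-(starRingEnd ℂ) (u 1), (starRingEnd ℂ) (u 0)] with hmdef
  have hm : ‖m‖ = ‖u‖ := by
    rw [EuclideanSpace.norm_eq, EuclideanSpace.norm_eq]
    congr 1
    simp [hmdef, Fin.sum_univ_two, add_comm]
  have hinner : (inner ℂ m v : ℂ) = wedge u v := by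
    simp only [PiLp.inner_apply, RCLike.inner_apply, Fin.sum_univ_two, hmdef, wedge]
    simp [mul_comm]
    ring
  calc ‖wedge u v‖ = ‖(inner ℂ m v : ℂ)‖ := by rw [hinner]
    _ ≤ ‖m‖ * ‖v‖ := norm_inner_le_norm m v
    _ = ‖u‖ * ‖v‖ := by rw [hm]

theorem stmt1 (A B : Matrix (Fin 2) (Fin 2) ℂ)
    (hA : ‖A.det‖ = 1) (hB : ‖B.det‖ = 1)
    (w₁ w₂ w₃ : EuclideanSpace ℂ (Fin 2))
    (h₁ : ‖w₁‖ = 1) (h₂ : ‖w₂‖ = 1) (h₃ : ‖w₃‖ = 1) :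
    ‖wedge w₁ (A.mulVec w₂)‖ ≤
      ‖wedge w₃ (A.mulVec w₂)‖ +
        Real.sqrt 2 * opNorm A * ‖wedge w₁ w₃‖ := by
  -- the auxiliary vector n, a unit vector with wedge w₃ n = ‖w₃‖² = 1
  set n : EuclideanSpace ℂ (Fin 2) :=
    (WithLp.equiv 2 (Fin 2 → ℂ)).symm ![-(starRingEnd ℂ) (w₃ 1), (starRingEnd ℂ) (w₃ 0)] with hndef
  have hn : ‖n‖ = ‖w₃‖ := by
    rw [EuclideanSpace.norm_eq, EuclideanSpace.norm_eq]
    congr 1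
    simp [hndef, Fin.sum_univ_two, add_comm]
  have hnorm3 : ‖w₃ 0‖ ^ 2 + ‖w₃ 1‖ ^ 2 = 1 := by
    have := EuclideanSpace.norm_eq w₃
    rw [h₃, Fin.sum_univ_two] at this
    have h := this.symm
    nlinarith [Real.sq_sqrt (show (0:ℝ) ≤ ‖w₃ 0‖ ^ 2 + ‖w₃ 1‖ ^ 2 by positivity), h]
  have hw3n : wedge w₃ n = 1 := by
    simp only [wedge, hndef]
    simp only [WithLp.equiv_symm_apply, PiLp.toLp_apply, Matrix.cons_val_one, Matrix.head_cons,
      Matrix.cons_val_zero]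
    have hsumR : Complex.normSq (w₃ 0) + Complex.normSq (w₃ 1) = 1 := by
      rw [← Complex.sq_norm, ← Complex.sq_norm]
      simpa using hnorm3
    have hsum : (Complex.normSq (w₃ 0) : ℂ) + (Complex.normSq (w₃ 1) : ℂ) = 1 := by
      exact_mod_cast hsumR
    linear_combination Complex.mul_conj (w₃ 0) + Complex.mul_conj (w₃ 1) + hsum
  -- the target vector
  set x : EuclideanSpace ℂ (Fin 2) := Matrix.toEuclideanCLM (𝕜 := ℂ) A w₂ with hxdef
  have hx : ∀ i, x i = A.mulVec w₂ i := fun i => rfl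
  have hxfun : (A.mulVec w₂ : Fin 2 → ℂ) 0 = x 0 ∧ (A.mulVec w₂ : Fin 2 → ℂ) 1 = x 1 :=
    ⟨(hx 0).symm, (hx 1).symm⟩
  have hwx1 : wedge w₁ (A.mulVec w₂) = wedge w₁ x := by
    simp only [wedge, hxfun.1, hxfun.2]
  have hwx3 : wedge w₃ (A.mulVec w₂) = wedge w₃ x := by
    simp only [wedge, hxfun.1, hxfun.2]
  have hxle : ‖x‖ ≤ opNorm A := by
    have := (Matrix.toEuclideanCLM (𝕜 := ℂ) A).le_opNorm w₂
    rw [h₂, mul_one] at this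
    exact this
  -- Plücker identity
  have plucker : wedge w₁ x * wedge w₃ n
      = wedge w₁ n * wedge w₃ x - wedge w₁ w₃ * wedge n x := by
    simp only [wedge]; ring
  have key : wedge w₁ x = wedge w₁ n * wedge w₃ x - wedge w₁ w₃ * wedge n x := by
    rw [← plucker, hw3n, mul_one]
  have h1n : ‖wedge w₁ n‖ ≤ 1 := by
    have := wedge_abs_le w₁ n
    rwa [h₁, hn, h₃, one_mul] at this
  have hnx : ‖wedge n x‖ ≤ opNorm A := by
    have := wedge_abs_le n x
    rw [hn, h₃, one_mul] at this
    exact this.trans hxle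
  have hopnn : 0 ≤ opNorm A := norm_nonneg _
  have hsqrt : (1:ℝ) ≤ Real.sqrt 2 := by
    rw [show (1:ℝ) = Real.sqrt 1 from (Real.sqrt_one).symm]
    exact Real.sqrt_le_sqrt (by norm_num)
  calc ‖wedge w₁ (A.mulVec w₂)‖
      = ‖wedge w₁ n * wedge w₃ x - wedge w₁ w₃ * wedge n x‖ := by
        rw [hwx1, key]
    _ ≤ ‖wedge w₁ n * wedge w₃ x‖ + ‖wedge w₁ w₃ * wedge n x‖ := by
        exact (norm_sub_le _ _)
    _ = ‖wedge w₁ n‖ * ‖wedge w₃ x‖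
        + ‖wedge w₁ w₃‖ * ‖wedge n x‖ := by
        rw [norm_mul, norm_mul]
    _ ≤ 1 * ‖wedge w₃ x‖ + ‖wedge w₁ w₃‖ * opNorm A := by
        gcongr
        all_goals first | exact h1n | exact hnx
    _ ≤ ‖wedge w₃ (A.mulVec w₂)‖ + Real.sqrt 2 * opNorm A * ‖wedge w₁ w₃‖ := by
        rw [one_mul, hwx3]
        have : ‖wedge w₁ w₃‖ * opNorm A ≤ Real.sqrt 2 * opNorm A * ‖wedge w₁ w₃‖ := by
          rw [mul_comm (Real.sqrt 2 * opNorm A) _, ← mul_assoc]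
          gcongr
          nlinarith [norm_nonneg (wedge w₁ w₃)]
        linarith
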